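/- Let D be an orientation of a multigraph that minimizes the overflow Σ_v max(outdeg(v) − d, 0). If there is a directed path in D from a vertex u with outdeg(u) > d to a vertex w with outdeg(w) < d, then reversing all edges along this path yields an orientation with strictly smaller overflow, a contradiction; hence no such path exists. -/

import Mathlib

section Aux

variable {V E : Type*} [Fintype V] [Fintype E] [DecidableEq V]
  (h1 h2 : E → V)

private def src (o : E → Bool) (e : E) : V := if o e then h1 e else h2 e
private def dst (o : E → Bool) (e : E) : V := if o e then h2 e else h1 e

private def od (o : E → Bool) (v : V) : ℕ :=
  (Finset.univ.filter (fun e : E => src h1 h2 o e = v)).card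

private def isPath (o : E → Bool) : List E → V → V → Prop
  | [], u, w => u = w
  | e :: l, u, w => src h1 h2 o e = u ∧ isPath o l (dst h1 h2 o e) w

private lemma src_update [DecidableEq E] (o : E → Bool) (e e' : E) :
    src h1 h2 (Function.update o e (!o e)) e' =
      if e' = e then dst h1 h2 o e else src h1 h2 o e' := by
  by_cases h : e' = e
  · subst h; simp only [src, dst, Function.update, if_pos rfl]
    cases o e' <;> simp
  · simp [src, Function.update, h]

private lemma dst_update [DecidableEq E] (o : E → Bool) (e e' : E) :
    dst h1 h2 (Function.update o e (!o e)) e' =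
      if e' = e then src h1 h2 o e else dst h1 h2 o e' := by
  by_cases h : e' = e
  · subst h; simp only [src, dst, Function.update, if_pos rfl]
    cases o e' <;> simp
  · simp [dst, Function.update, h]

private lemma filter_update [DecidableEq E] (o : E → Bool) (e : E) (x : V) :
    Finset.univ.filter (fun e' : E => src h1 h2 (Function.update o e (!o e)) e' = x) =
      if dst h1 h2 o e = x then
        insert e ((Finset.univ.filter (fun e' : E => src h1 h2 o e' = x)).erase e)
      else (Finset.univ.filter (fun e' : E => src h1 h2 o e' = x)).erase e := by
  ext e'
  by_cases h : e' = e
  · subst h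
    by_cases hd : dst h1 h2 o e' = x <;> simp [src_update, hd]
  · by_cases hd : dst h1 h2 o e = x <;> simp [src_update, h, hd]

private lemma od_update_src [DecidableEq E] (o : E → Bool) (e : E)
    (hne : src h1 h2 o e ≠ dst h1 h2 o e) :
    od h1 h2 (Function.update o e (!o e)) (src h1 h2 o e)
      = od h1 h2 o (src h1 h2 o e) - 1 ∧ 1 ≤ od h1 h2 o (src h1 h2 o e) := by
  have hmem : e ∈ Finset.univ.filter (fun e' : E => src h1 h2 o e' = src h1 h2 o e) := by
    simp
  constructor
  · rw [od, filter_update, if_neg (Ne.symm hne), Finset.card_erase_of_mem hmem]; rfl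
  · exact Finset.card_pos.mpr ⟨e, hmem⟩

private lemma od_update_dst [DecidableEq E] (o : E → Bool) (e : E)
    (hne : src h1 h2 o e ≠ dst h1 h2 o e) :
    od h1 h2 (Function.update o e (!o e)) (dst h1 h2 o e)
      = od h1 h2 o (dst h1 h2 o e) + 1 := by
  have hmem : e ∉ Finset.univ.filter (fun e' : E => src h1 h2 o e' = dst h1 h2 o e) := by
    simp [hne]
  rw [od, filter_update, if_pos rfl, Finset.erase_eq_of_notMem hmem,
    Finset.card_insert_of_notMem hmem]
  rfl

private lemma od_update_other [DecidableEq E] (o : E → Bool) (e : E) (x : V)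
    (hs : src h1 h2 o e ≠ x) (hdd : dst h1 h2 o e ≠ x) :
    od h1 h2 (Function.update o e (!o e)) x = od h1 h2 o x := by
  have hmem : e ∉ Finset.univ.filter (fun e' : E => src h1 h2 o e' = x) := by simp [hs]
  rw [od, filter_update, if_neg hdd, Finset.erase_eq_of_notMem hmem]
  rfl

private lemma sum_two_diff (f g : V → ℕ) (a b : V) (hab : a ≠ b)
    (h : ∀ x, x ≠ a → x ≠ b → f x = g x) :
    (∑ x, f x) + g a + g b = (∑ x, g x) + f a + f b := by
  have hb : b ∈ Finset.univ.erase a := Finset.mem_erase.mpr ⟨Ne.symm hab, Finset.mem_univ b⟩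
  have hf : ∑ x, f x = f a + (f b + ∑ x ∈ (Finset.univ.erase a).erase b, f x) := by
    rw [Finset.add_sum_erase _ f hb, Finset.add_sum_erase _ f (Finset.mem_univ a)]
  have hg : ∑ x, g x = g a + (g b + ∑ x ∈ (Finset.univ.erase a).erase b, g x) := by
    rw [Finset.add_sum_erase _ g hb, Finset.add_sum_erase _ g (Finset.mem_univ a)]
  have hcongr : ∑ x ∈ (Finset.univ.erase a).erase b, f x
      = ∑ x ∈ (Finset.univ.erase a).erase b, g x := by
    refine Finset.sum_congr rfl fun x hx => ?_
    rw [Finset.mem_erase, Finset.mem_erase] at hx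
    exact h x hx.2.1 hx.1
  omega

private lemma isPath_append_cons (o : E → Bool) (e : E) (b : List E) (w : V) :
    ∀ (a : List E) (u : V), isPath h1 h2 o (a ++ e :: b) u w →
      isPath h1 h2 o b (dst h1 h2 o e) w := by
  intro a
  induction a with
  | nil => intro u h; exact h.2
  | cons x t ih => intro u h; exact ih _ h.2

private lemma isPath_update_of_not_mem [DecidableEq E] (o : E → Bool) (e : E) (w : V) :
    ∀ (l : List E) (u : V), e ∉ l → isPath h1 h2 o l u w →
      isPath h1 h2 (Function.update o e (!o e)) l u w := by
  intro l
  induction l with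
  | nil => intro u _ h; exact h
  | cons x t ih =>
    intro u hmem h
    have hx : x ≠ e := fun hx => hmem (hx ▸ List.mem_cons_self (a := x) (l := t))
    refine ⟨?_, ?_⟩
    · rw [src_update, if_neg hx]; exact h.1
    · rw [dst_update, if_neg hx]
      exact ih _ (fun ht => hmem (List.mem_cons_of_mem _ ht)) h.2

private lemma last_occurrence [DecidableEq E] (e : E) :
    ∀ l : List E, e ∈ l → ∃ a b : List E, l = a ++ e :: b ∧ e ∉ b := by
  intro l
  induction l with
  | nil => intro h; exact absurd h (List.not_mem_nil (a := e))
  | cons x t ih =>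
    intro h
    by_cases ht : e ∈ t
    · obtain ⟨a, b, rfl, hb⟩ := ih ht
      exact ⟨x :: a, b, rfl, hb⟩
    · have hx : x = e := by
        rcases List.mem_cons.mp h with h' | h'
        · exact h'.symm
        · exact absurd h' ht
      exact ⟨[], t, by simp [hx], ht⟩

private lemma key [DecidableEq E] (d : ℕ) :
    ∀ n : ℕ, ∀ o : E → Bool,
      (∀ o' : E → Bool, (∑ v : V, (od h1 h2 o v - d)) ≤ ∑ v : V, (od h1 h2 o' v - d)) →
      ∀ (u w : V) (l : List E), l.length ≤ n → isPath h1 h2 o l u w →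
      d < od h1 h2 o u → od h1 h2 o w < d → False := by
  intro n
  induction n with
  | zero =>
    intro o _ u w l hl hp hu hw
    match l, hp with
    | [], hp => subst hp; omega
    | e :: t, _ => simp at hl
  | succ n ih =>
    intro o hmin u w l hl hp hu hw
    match l, hp with
    | [], hp => subst hp; omega
    | e :: t, hp =>
      obtain ⟨hsrc, hrest⟩ := hp
      by_cases huv : u = dst h1 h2 o e
      · -- loop edge: just drop it
        exact ih o hmin u w t (by simpa using Nat.le_of_succ_le_succ hl)
          (huv ▸ hrest) hu hw
      · have hne : src h1 h2 o e ≠ dst h1 h2 o e := by rw [hsrc]; exact huv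
        obtain ⟨hodu, hodu1⟩ := od_update_src h1 h2 o e hne
        have hodv : od h1 h2 (Function.update o e (!o e)) (dst h1 h2 o e)
            = od h1 h2 o (dst h1 h2 o e) + 1 := od_update_dst h1 h2 o e hne
        rw [hsrc] at hodu hodu1
        have hodx : ∀ x, x ≠ u → x ≠ dst h1 h2 o e →
            od h1 h2 (Function.update o e (!o e)) x = od h1 h2 o x := by
          intro x hxu hxv
          exact od_update_other h1 h2 o e x (by rw [hsrc]; exact fun h => hxu h.symm)
            (fun h => hxv h.symm)
        have hsum := sum_two_diff (fun x => od h1 h2 (Function.update o e (!o e)) x - d)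
          (fun x => od h1 h2 o x - d)
          u (dst h1 h2 o e) huv (fun x hxu hxv => by simp only [hodx x hxu hxv])
        simp only [hodu, hodv] at hsum
        by_cases hv0d : od h1 h2 o (dst h1 h2 o e) < d
        · -- strict decrease: contradiction with minimality
          have := hmin (Function.update o e (!o e))
          omega
        · -- equal overflow: the reversed orientation is also minimal
          have heq : (∑ v : V, (od h1 h2 (Function.update o e (!o e)) v - d))
              = ∑ v : V, (od h1 h2 o v - d) := by
            have := hmin (Function.update o e (!o e))
            omega
          have hmin' : ∀ o'' : E → Bool,
              (∑ v : V, (od h1 h2 (Function.update o e (!o e)) v - d))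
                ≤ ∑ v : V, (od h1 h2 o'' v - d) := by
            intro o''; rw [heq]; exact hmin o''
          have hwu : w ≠ u := fun h => by rw [h] at hw; omega
          have hwv : w ≠ dst h1 h2 o e := fun h => by rw [h] at hw; omega
          have hw' : od h1 h2 (Function.update o e (!o e)) w < d := by
            rw [hodx w hwu hwv]; exact hw
          have hv' : d < od h1 h2 (Function.update o e (!o e)) (dst h1 h2 o e) := by omega
          by_cases hmem : e ∈ t
          · obtain ⟨a, b, rfl, hb⟩ := last_occurrence e t hmem
            have hpb : isPath h1 h2 o b (dst h1 h2 o e) w :=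
              isPath_append_cons h1 h2 o e b w a _ hrest
            have hpb' : isPath h1 h2 (Function.update o e (!o e)) b (dst h1 h2 o e) w :=
              isPath_update_of_not_mem h1 h2 o e w b _ hb hpb
            have hlen : b.length ≤ n := by
              simp only [List.length_cons, List.length_append] at hl; omega
            exact ih _ hmin' _ w b hlen hpb' hv' hw'
          · have hpt' : isPath h1 h2 (Function.update o e (!o e)) t (dst h1 h2 o e) w :=
              isPath_update_of_not_mem h1 h2 o e w t _ hmem hrest
            exact ih _ hmin' _ w t (by simpa using Nat.le_of_succ_le_succ hl) hpt' hv' hw'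

end Aux

/-- Let `o` be an orientation of a finite multigraph (edges `E` with endpoints
`h1 h2 : E → V`) minimizing the overflow Σ_v max(outdeg(v) − d, 0).  Then there is
no directed path from a vertex of outdegree > d to a vertex of outdegree < d. -/
theorem stmt_2 {V E : Type*} [Fintype V] [Fintype E] [DecidableEq V]
    (h1 h2 : E → V) (d : ℕ) (hd : 1 ≤ d) (o : E → Bool)
    (outdeg : (E → Bool) → V → ℕ)
    (houtdeg : ∀ o' v, outdeg o' v =
      (Finset.univ.filter (fun e : E => (if o' e then h1 e else h2 e) = v)).card)
    (hmin : ∀ o' : E → Bool, ∑ v : V, (outdeg o v - d) ≤ ∑ v : V, (outdeg o' v - d)) :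
    ¬ ∃ u w : V, d < outdeg o u ∧ outdeg o w < d ∧
      Relation.ReflTransGen
        (fun a b : V => ∃ e : E, (if o e then h1 e else h2 e) = a ∧
          (if o e then h2 e else h1 e) = b) u w := by
  haveI := Classical.decEq E
  rintro ⟨u, w, hu, hw, hpath⟩
  have hod : ∀ (o' : E → Bool) v, outdeg o' v = od h1 h2 o' v := by
    intro o' v; rw [houtdeg]; rfl
  -- extract a list of edges from the path
  have hlist : ∃ l : List E, isPath h1 h2 o l u w := by
    clear hu hw hmin
    induction hpath using Relation.ReflTransGen.head_induction_on with
    | refl => exact ⟨[], rfl⟩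
    | head hstep _ ihl =>
      obtain ⟨l, hl⟩ := ihl
      obtain ⟨e, he1, he2⟩ := hstep
      exact ⟨e :: l, he1, by rw [show dst h1 h2 o e = _ from he2]; exact hl⟩
  obtain ⟨l, hl⟩ := hlist
  refine key h1 h2 d l.length o ?_ u w l le_rfl hl ?_ ?_
  · intro o'
    simpa only [hod] using hmin o'
  · rw [← hod]; exact hu
  · rw [← hod]; exact hw
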